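/- Consider the microgrid incremental pH model. Let ũ : ℝ → ℝ^{nG} and let x̃ : ℝ → ℝⁿ be differentiable with x̃'(t) = (J − R̃(x̃(t)))·Q·x̃(t) + g·ũ(t) for all t, and set ỹ(t) = gᵀQx̃(t) and H(x̃) = ½x̃ᵀQx̃. Fix a time t and write q̃ for the last nN-block of x̃(t). If for every k = 1,…,nN one has q̄_k(q̃_k + q̄_k) ≠ 0 and G_k > P_k C_k² / (q̄_k (q̃_k + q̄_k)) (i.e., x̃(t) lies in the domain 𝔻), then the derivative of s ↦ H(x̃(s)) at s = t is at most ỹ(t)ᵀũ(t). -/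

import Mathlib

open Matrix

/-- Index type of the microgrid state: generator currents, line currents, bus charges. -/
abbrev BIdx (nG nE nN : ℕ) := Fin nG ⊕ (Fin nE ⊕ Fin nN)

/-- The input matrix `g = [I; 0; 0]`. -/
noncomputable def gMat (nG nE nN : ℕ) : Matrix (BIdx nG nE nN) (Fin nG) ℝ :=
  Matrix.of fun i j =>
    match i with
    | Sum.inl i' => if i' = j then (1 : ℝ) else 0
    | Sum.inr _ => 0

/-- Block-diagonal matrix with three diagonal blocks. -/
noncomputable def bd3 {nG nE nN : ℕ} (A : Matrix (Fin nG) (Fin nG) ℝ)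
    (B : Matrix (Fin nE) (Fin nE) ℝ) (D : Matrix (Fin nN) (Fin nN) ℝ) :
    Matrix (BIdx nG nE nN) (BIdx nG nE nN) ℝ :=
  Matrix.fromBlocks A 0 0 (Matrix.fromBlocks B 0 0 D)

/-- `G_P(q̃) = diag (P_k C_k² / (q̄_k (q̃_k + q̄_k)))`. -/
noncomputable def GPm {nN : ℕ} (P cD qbar : Fin nN → ℝ) (qt : Fin nN → ℝ) :
    Matrix (Fin nN) (Fin nN) ℝ :=
  Matrix.diagonal fun k => P k * (cD k) ^ 2 / (qbar k * (qt k + qbar k))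

/-- The state-dependent dissipation matrix
`R̃(z̃) = blockdiag(R_G + R_D, R_E, G − G_P(q̃))` of the incremental microgrid model. -/
noncomputable def Rtil {nG nE nN : ℕ} (rG rD : Fin nG → ℝ) (rE : Fin nE → ℝ)
    (gD cD P qbar : Fin nN → ℝ) (z : BIdx nG nE nN → ℝ) :
    Matrix (BIdx nG nE nN) (BIdx nG nE nN) ℝ :=
  bd3 (Matrix.diagonal fun i => rG i + rD i) (Matrix.diagonal rE)
    (Matrix.diagonal gD - GPm P cD qbar fun k => z (Sum.inr (Sum.inr k)))

lemma hasDerivAt_quadForm {n : Type*} [Fintype n] (Q : Matrix n n ℝ) (x : ℝ → n → ℝ)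
    (v : n → ℝ) (t : ℝ) (hx : HasDerivAt x v t) :
    HasDerivAt (fun s => x s ⬝ᵥ (Q *ᵥ x s)) (v ⬝ᵥ (Q *ᵥ x t) + x t ⬝ᵥ (Q *ᵥ v)) t := by
  have hxi : ∀ i, HasDerivAt (fun s => x s i) (v i) t := hasDerivAt_pi.mp hx
  simp only [dotProduct, Matrix.mulVec, ← Finset.sum_add_distrib]
  exact HasDerivAt.fun_sum fun i _ =>
    (hxi i).mul (HasDerivAt.fun_sum fun j _ => (hxi j).const_mul (Q i j))

/-- **Proposition 1.** Passivity of the incremental microgrid pH model on the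
domain `𝔻`: at any time `t` where the state lies in `𝔻`, the derivative of the storage
function `H(x̃(s)) = ½ x̃(s)ᵀQx̃(s)` is at most `ỹ(t)ᵀũ(t)`. -/
theorem incremental_passivity
    (nG nE nN : ℕ) (hnG : 0 < nG) (hnE : 0 < nE) (hnN : 0 < nN)
    (rG rD : Fin nG → ℝ) (rE : Fin nE → ℝ) (gD cD : Fin nN → ℝ)
    (hrG : ∀ i, 0 < rG i) (hrD : ∀ i, 0 < rD i) (hrE : ∀ j, 0 < rE j)
    (hcD : ∀ k, 0 < cD k) (hgD : ∀ k, 0 ≤ gD k)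
    (Q : Matrix (BIdx nG nE nN) (BIdx nG nE nN) ℝ) (hQsymm : Q.IsSymm) (hQpd : Q.PosDef)
    (J : Matrix (BIdx nG nE nN) (BIdx nG nE nN) ℝ) (hJ : Jᵀ = -J)
    (P qbar : Fin nN → ℝ) (hqbar : ∀ k, qbar k ≠ 0)
    (ut : ℝ → (Fin nG → ℝ)) (xt : ℝ → (BIdx nG nE nN → ℝ))
    (hxdiff : ∀ s : ℝ, HasDerivAt xt
      ((J - Rtil rG rD rE gD cD P qbar (xt s)) *ᵥ (Q *ᵥ xt s) + gMat nG nE nN *ᵥ ut s) s)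
    (t : ℝ)
    (hdom : ∀ k : Fin nN,
      qbar k * (xt t (Sum.inr (Sum.inr k)) + qbar k) ≠ 0 ∧
      P k * (cD k) ^ 2 / (qbar k * (xt t (Sum.inr (Sum.inr k)) + qbar k)) < gD k) :
    deriv (fun s => (1 / 2 : ℝ) * ((xt s) ⬝ᵥ (Q *ᵥ xt s))) t ≤
      ((gMat nG nE nN)ᵀ *ᵥ (Q *ᵥ xt t)) ⬝ᵥ ut t := by

  classical
  set w := Q *ᵥ xt t with hw
  set R := Rtil rG rD rE gD cD P qbar (xt t) with hR
  set v := (J - R) *ᵥ w + gMat nG nE nN *ᵥ ut t with hv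
  have hx : HasDerivAt xt v t := hxdiff t
  have hd := (hasDerivAt_quadForm Q xt v t hx).const_mul (1/2 : ℝ)
  have hsym : xt t ⬝ᵥ (Q *ᵥ v) = v ⬝ᵥ w := by
    rw [Matrix.dotProduct_mulVec, ← Matrix.mulVec_transpose, hQsymm.eq, dotProduct_comm]
  rw [hd.deriv, hsym]
  have hderiv : (1/2 : ℝ) * (v ⬝ᵥ w + v ⬝ᵥ w) = v ⬝ᵥ w := by ring
  rw [hderiv, hv, add_dotProduct]
  have hgu : (gMat nG nE nN *ᵥ ut t) ⬝ᵥ w = ((gMat nG nE nN)ᵀ *ᵥ w) ⬝ᵥ ut t := by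
    rw [dotProduct_comm, Matrix.dotProduct_mulVec, ← Matrix.mulVec_transpose,
      dotProduct_comm]
  rw [hgu]
  have hJw : (J *ᵥ w) ⬝ᵥ w = 0 := by
    have h1 : (J *ᵥ w) ⬝ᵥ w = w ⬝ᵥ (J *ᵥ w) := dotProduct_comm _ _
    have h2 : w ⬝ᵥ (J *ᵥ w) = (Jᵀ *ᵥ w) ⬝ᵥ w := by
      rw [Matrix.dotProduct_mulVec, ← Matrix.mulVec_transpose]
    rw [hJ, Matrix.neg_mulVec, neg_dotProduct] at h2
    linarith [h1, h2]
  have hRdiag : R = Matrix.diagonal (Sum.elim (fun i => rG i + rD i)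
      (Sum.elim rE (fun k => gD k - P k * (cD k) ^ 2 /
        (qbar k * (xt t (Sum.inr (Sum.inr k)) + qbar k))))) := by
    rw [hR]
    unfold Rtil bd3 GPm
    rw [Matrix.diagonal_sub, Matrix.fromBlocks_diagonal, Matrix.fromBlocks_diagonal]
  have hRw : 0 ≤ (R *ᵥ w) ⬝ᵥ w := by
    rw [hRdiag]
    simp only [dotProduct, Matrix.mulVec_diagonal]
    apply Finset.sum_nonneg
    intro i _
    have hnn : 0 ≤ Sum.elim (fun i => rG i + rD i)
        (Sum.elim rE (fun k => gD k - P k * (cD k) ^ 2 /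
          (qbar k * (xt t (Sum.inr (Sum.inr k)) + qbar k)))) i := by
      rcases i with i | j | k
      · exact le_of_lt (by simpa using add_pos (hrG i) (hrD i))
      · exact (hrE j).le
      · simp only [Sum.elim_inr, sub_nonneg]
        exact (hdom k).2.le
    calc (0:ℝ) ≤ _ * (w i * w i) := mul_nonneg hnn (mul_self_nonneg _)
      _ = _ * w i * w i := by ring
  have : ((J - R) *ᵥ w) ⬝ᵥ w ≤ 0 := by
    rw [Matrix.sub_mulVec, sub_dotProduct, hJw]
    linarith
  linarith
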